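/- Let H = H1 ⊗ H' with dim H1 = 2, and let {|a_{s,1}⟩ ⊗ |a'_s⟩ : s = 1,...,D} be an orthogonal product basis of H. Let V be a line in H1 occurring among the lines [a_{s,1}], let P = {s : [a_{s,1}] = V} and Q = {s : [a_{s,1}] = V^⊥}. Then the subspace of H' spanned by {|a'_s⟩ : s ∈ P} equals the subspace spanned by {|a'_s⟩ : s ∈ Q}. -/

import Mathlib

open scoped InnerProductSpace

/-- Concrete tensor product of two vectors in Euclidean spaces. -/
noncomputable def tensor2 {ι κ : Type*} [Fintype ι] [Fintype κ]
    (a : EuclideanSpace ℂ ι) (b : EuclideanSpace ℂ κ) :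
    EuclideanSpace ℂ (ι × κ) :=
  WithLp.toLp 2 (fun p : ι × κ => a p.1 * b p.2)

lemma inner_tensor2 {ι κ : Type*} [Fintype ι] [Fintype κ]
    (a c : EuclideanSpace ℂ ι) (b d : EuclideanSpace ℂ κ) :
    (inner ℂ (tensor2 a b) (tensor2 c d) : ℂ) = inner ℂ a c * inner ℂ b d := by
  simp only [tensor2, PiLp.inner_apply, PiLp.toLp_apply, RCLike.inner_apply, map_mul]
  rw [Finset.sum_mul_sum, ← Finset.sum_product']
  apply Finset.sum_congr rfl; intro p _; ring

/-- Let `{a_s ⊗ b_s}` be an orthogonal product basis of `ℂ² ⊗ H'`, let `V` be a line occurring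
among the lines `[a_s]`, and set `P = {s : [a_s] = V}`, `Q = {s : [a_s] = Vᗮ}`. Then the span of
`{b_s : s ∈ P}` equals the span of `{b_s : s ∈ Q}`. -/
theorem stmt4 (d : ℕ)
    (a : Fin (2 * d) → EuclideanSpace ℂ (Fin 2))
    (b : Fin (2 * d) → EuclideanSpace ℂ (Fin d))
    (ha : ∀ s, ‖a s‖ = 1) (hb : ∀ s, ‖b s‖ = 1)
    (honb : Orthonormal ℂ (fun s => tensor2 (a s) (b s)))
    (hspan : Submodule.span ℂ (Set.range fun s => tensor2 (a s) (b s)) = ⊤)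
    (V : Submodule ℂ (EuclideanSpace ℂ (Fin 2)))
    (hV : ∃ s, V = ℂ ∙ a s) :
    Submodule.span ℂ (b '' {s | (ℂ ∙ a s) = V})
      = Submodule.span ℂ (b '' {s | (ℂ ∙ a s) = Submodule.orthogonal V}) := by
  classical
  obtain ⟨s₀, hs₀⟩ := hV
  have hane : ∀ s, a s ≠ 0 := by
    intro s h
    have := ha s
    rw [h, norm_zero] at this
    norm_num at this
  have hVfin : Module.finrank ℂ V = 1 := by
    rw [hs₀]; exact finrank_span_singleton (hane s₀)
  have htot : Module.finrank ℂ (EuclideanSpace ℂ (Fin 2)) = 2 := finrank_euclideanSpace_fin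
  have hVperp : Module.finrank ℂ Vᗮ = 1 := by
    have := Submodule.finrank_add_finrank_orthogonal V
    omega
  have hline : ∀ (x : EuclideanSpace ℂ (Fin 2)) (W : Submodule ℂ (EuclideanSpace ℂ (Fin 2))),
      x ≠ 0 → x ∈ W → Module.finrank ℂ W = 1 → (ℂ ∙ x) = W := by
    intro x W hx hxW hW
    exact Submodule.eq_of_le_of_finrank_le
      ((Submodule.span_singleton_le_iff_mem _ _).mpr hxW)
      (by rw [hW, finrank_span_singleton hx])
  set P : Set (Fin (2 * d)) := {s | (ℂ ∙ a s) = V} with hP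
  set Q : Set (Fin (2 * d)) := {s | (ℂ ∙ a s) = Vᗮ} with hQ
  set R : Set (Fin (2 * d)) := {s | (ℂ ∙ a s) ≠ V ∧ (ℂ ∙ a s) ≠ Vᗮ} with hR
  have hbz : ∀ s t, s ≠ t → (inner ℂ (a s) (a t) : ℂ) ≠ 0 → (inner ℂ (b s) (b t) : ℂ) = 0 := by
    intro s t hst hne
    have h0 : (inner ℂ (tensor2 (a s) (b s)) (tensor2 (a t) (b t)) : ℂ) = 0 := honb.2 hst
    rw [inner_tensor2] at h0
    exact (mul_eq_zero.mp h0).resolve_left hne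
  -- b's from P are orthogonal to b's from R
  have hPR : ∀ s ∈ P, ∀ t ∈ R, (inner ℂ (b s) (b t) : ℂ) = 0 := by
    intro s hs t ht
    have hst : s ≠ t := by rintro rfl; exact ht.1 hs
    refine hbz s t hst ?_
    intro h0
    have hmem : a t ∈ (ℂ ∙ a s)ᗮ := Submodule.mem_orthogonal_singleton_iff_inner_right.mpr h0
    rw [hs] at hmem
    exact ht.2 (hline (a t) Vᗮ (hane t) hmem hVperp)
  -- b's from Q are orthogonal to b's from R
  have hQR : ∀ s ∈ Q, ∀ t ∈ R, (inner ℂ (b s) (b t) : ℂ) = 0 := by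
    intro s hs t ht
    have hst : s ≠ t := by rintro rfl; exact ht.2 hs
    refine hbz s t hst ?_
    intro h0
    have hmem : a t ∈ (ℂ ∙ a s)ᗮ := Submodule.mem_orthogonal_singleton_iff_inner_right.mpr h0
    rw [hs, Submodule.orthogonal_orthogonal] at hmem
    exact ht.1 (hline (a t) V (hane t) hmem hVfin)
  -- key completeness lemma
  have keytop : ∀ (v : EuclideanSpace ℂ (Fin 2)) (S : Set (Fin (2 * d))), v ≠ 0 →
      (∀ t, t ∉ S → (inner ℂ (a t) v : ℂ) = 0) →
      Submodule.span ℂ (b '' S) = ⊤ := by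
    intro v S hv hS
    have hperp : (Submodule.span ℂ (b '' S))ᗮ = ⊥ := by
      rw [Submodule.eq_bot_iff]
      intro c hc
      have hx : ∀ t, (inner ℂ (tensor2 (a t) (b t)) (tensor2 v c) : ℂ) = 0 := by
        intro t
        rw [inner_tensor2]
        by_cases htS : t ∈ S
        · have hbc : (inner ℂ (b t) c : ℂ) = 0 :=
            Submodule.inner_right_of_mem_orthogonal
              (Submodule.subset_span (Set.mem_image_of_mem b htS)) hc
          rw [hbc, mul_zero]
        · rw [hS t htS, zero_mul]
      have hx0 : tensor2 v c = 0 := by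
        have hle : Submodule.span ℂ (Set.range fun s => tensor2 (a s) (b s))
            ≤ (ℂ ∙ (tensor2 v c))ᗮ := by
          rw [Submodule.span_le]
          rintro _ ⟨t, rfl⟩
          exact Submodule.mem_orthogonal_singleton_iff_inner_right.mpr
            (inner_eq_zero_symm.mp (hx t))
        rw [hspan] at hle
        have hmem : tensor2 v c ∈ (ℂ ∙ (tensor2 v c))ᗮ := hle Submodule.mem_top
        exact inner_self_eq_zero.mp
          (Submodule.inner_right_of_mem_orthogonal (Submodule.mem_span_singleton_self _) hmem)
      obtain ⟨i, hi⟩ : ∃ i, v i ≠ 0 := by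
        by_contra h
        push_neg at h
        exact hv (PiLp.ext h)
      ext j
      have h2 : v i * c j = 0 := congrFun (congrArg WithLp.ofLp hx0) (i, j)
      have : c j = 0 := (mul_eq_zero.mp h2).resolve_left hi
      simpa using this
    calc Submodule.span ℂ (b '' S)
        = (Submodule.span ℂ (b '' S))ᗮᗮ := (Submodule.orthogonal_orthogonal _).symm
      _ = ⊤ := by rw [hperp, Submodule.bot_orthogonal_eq_top]
  -- span (b '' (P ∪ R)) = ⊤
  have htop1 : Submodule.span ℂ (b '' (P ∪ R)) = ⊤ := by
    refine keytop (a s₀) (P ∪ R) (hane s₀) ?_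
    intro t ht
    simp only [Set.mem_union, hP, hR, Set.mem_setOf_eq, not_or, not_and, not_not] at ht
    have htQ : (ℂ ∙ a t) = Vᗮ := ht.2 ht.1
    have h1 : a t ∈ Vᗮ := by rw [← htQ]; exact Submodule.mem_span_singleton_self _
    have h2 : a s₀ ∈ V := by rw [hs₀]; exact Submodule.mem_span_singleton_self _
    exact Submodule.inner_left_of_mem_orthogonal h2 h1
  -- span (b '' (Q ∪ R)) = ⊤
  obtain ⟨w, hwV, hw0⟩ : ∃ w, w ∈ Vᗮ ∧ w ≠ 0 := by
    by_contra h
    push_neg at h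
    have : Vᗮ = ⊥ := by
      rw [Submodule.eq_bot_iff]; exact fun x hx => h x hx
    rw [this, finrank_bot] at hVperp
    omega
  have htop2 : Submodule.span ℂ (b '' (Q ∪ R)) = ⊤ := by
    refine keytop w (Q ∪ R) hw0 ?_
    intro t ht
    simp only [Set.mem_union, hQ, hR, Set.mem_setOf_eq, not_or, not_and, not_not] at ht
    have htP : (ℂ ∙ a t) = V := by
      by_contra hne
      exact ht.1 (ht.2 hne)
    have h1 : a t ∈ V := by rw [← htP]; exact Submodule.mem_span_singleton_self _
    exact Submodule.inner_right_of_mem_orthogonal h1 hwV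
  -- orthogonality of spans
  have hAC : Submodule.span ℂ (b '' P) ≤ (Submodule.span ℂ (b '' R))ᗮ := by
    refine Submodule.isOrtho_span.mpr ?_
    rintro _ ⟨s, hs, rfl⟩ _ ⟨t, ht, rfl⟩
    exact hPR s hs t ht
  have hBC : Submodule.span ℂ (b '' Q) ≤ (Submodule.span ℂ (b '' R))ᗮ := by
    refine Submodule.isOrtho_span.mpr ?_
    rintro _ ⟨s, hs, rfl⟩ _ ⟨t, ht, rfl⟩
    exact hQR s hs t ht
  -- both spans equal (span (b '' R))ᗮ
  have key : ∀ (S : Set (Fin (2 * d))),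
      Submodule.span ℂ (b '' (S ∪ R)) = ⊤ →
      Submodule.span ℂ (b '' S) ≤ (Submodule.span ℂ (b '' R))ᗮ →
      Submodule.span ℂ (b '' S) = (Submodule.span ℂ (b '' R))ᗮ := by
    intro S htop hle
    have hsup : Submodule.span ℂ (b '' S) ⊔ Submodule.span ℂ (b '' R) = ⊤ := by
      rw [← Submodule.span_union, ← Set.image_union]; exact htop
    calc Submodule.span ℂ (b '' S)
        = Submodule.span ℂ (b '' S) ⊔ (Submodule.span ℂ (b '' R) ⊓ (Submodule.span ℂ (b '' R))ᗮ) := by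
          rw [Submodule.inf_orthogonal_eq_bot, sup_bot_eq]
      _ = (Submodule.span ℂ (b '' S) ⊔ Submodule.span ℂ (b '' R)) ⊓ (Submodule.span ℂ (b '' R))ᗮ := by
          rw [sup_inf_assoc_of_le _ hle]
      _ = (Submodule.span ℂ (b '' R))ᗮ := by rw [hsup, top_inf_eq]
  rw [key P htop1 hAC, key Q htop2 hBC]
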